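/- arXiv:1608.02698 — 3 statements merged into one kernel-verified Lean document; each statement's English description precedes it below -/
import Mathlib

section
/- Let A be an n×n complex matrix partitioned as A = [[A11, A12],[A21, A22]] with A11 ∈ ℂ, A12 ∈ ℂ^{1×(n-1)}, A21 ∈ ℂ^{(n-1)×1}, A22 ∈ ℂ^{(n-1)×(n-1)}, and let ξ = [τ, 0, ..., 0]^T ∈ ℂ^{n×1} with τ ≠ 0. Then the pair (A, ξ) is controllable if and only if the pair (A22, A21) is controllable. -/
open Matrix Module

/-- Kalman-rank controllability: `rank [B, AB, ..., A^(n-1)B] = n`. -/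
def Controllable {ι κ : Type*} [Fintype ι] [Fintype κ] [DecidableEq ι]
    (A : Matrix ι ι ℂ) (B : Matrix ι κ ℂ) : Prop :=
  Matrix.rank (Matrix.of fun i (p : Fin (Fintype.card ι) × κ) =>
    (A ^ (p.1 : ℕ) * B) i p.2) = Fintype.card ι

/-- Extension by zero, `(Fin k → ℂ) →ₗ (Fin 1 ⊕ Fin k → ℂ)`. -/
def inrExt (k : ℕ) : (Fin k → ℂ) →ₗ[ℂ] ((Fin 1 ⊕ Fin k) → ℂ) where
  toFun w := Sum.elim 0 w
  map_add' u w := by funext s; cases s <;> simp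
  map_smul' c w := by funext s; cases s <;> simp

theorem inrExt_inj (k : ℕ) : Function.Injective (inrExt k) := by
  intro u w h
  funext i
  have := congrFun h (Sum.inr i)
  simpa [inrExt] using this

/-- With `ξ = [τ; 0]`, `τ ≠ 0`, the pair `(A, ξ)` is controllable iff `(A22, A21)` is. -/
theorem controllable_first_mode_iff {k : ℕ}
    (A11 : ℂ) (A12 : Matrix (Fin 1) (Fin k) ℂ)
    (A21 : Matrix (Fin k) (Fin 1) ℂ) (A22 : Matrix (Fin k) (Fin k) ℂ)
    (τ : ℂ) (hτ : τ ≠ 0)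
    (A : Matrix (Fin 1 ⊕ Fin k) (Fin 1 ⊕ Fin k) ℂ)
    (hA : A = Matrix.fromBlocks (Matrix.of fun _ _ => A11) A12 A21 A22)
    (ξ : Matrix (Fin 1 ⊕ Fin k) (Fin 1) ℂ)
    (hξ : ξ = Matrix.of fun i _ => Sum.elim (fun _ => τ) (fun _ => (0 : ℂ)) i) :
    Controllable A ξ ↔ Controllable A22 A21 := by
  classical
  set m := Fintype.card (Fin 1 ⊕ Fin k) with hmdef
  have hm : m = 1 + k := by simp [hmdef]
  -- basic data
  set e1 : (Fin 1 ⊕ Fin k) → ℂ := Sum.elim (fun _ => (1:ℂ)) (fun _ => 0) with he1def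
  set x : ℕ → ((Fin 1 ⊕ Fin k) → ℂ) := fun j => (A ^ j) *ᵥ e1 with hxdef
  set a : ℕ → ℂ := fun j => x j (Sum.inl 0) with hadef
  set b : ℕ → (Fin k → ℂ) := fun j i => x j (Sum.inr i) with hbdef
  set v : Fin k → ℂ := fun i => A21 i 0 with hvdef
  have hx : ∀ j, x (j+1) = A *ᵥ x j := by
    intro j
    simp [hxdef, pow_succ', mulVec_mulVec]
  have hb : ∀ j, b (j+1) = a j • v + A22 *ᵥ b j := by
    intro j
    funext i
    have : x (j+1) (Sum.inr i) = (A *ᵥ x j) (Sum.inr i) := by rw [hx j]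
    simp only [hbdef, this, mulVec, dotProduct, Fintype.sum_sum_type, hA,
      fromBlocks_apply₂₁, fromBlocks_apply₂₂, Fin.sum_univ_one,
      Pi.add_apply, Pi.smul_apply, smul_eq_mul, hvdef, hadef]
    ring
  have hb0 : b 0 = 0 := by
    funext i; simp [hbdef, hxdef, he1def]
  have ha0 : a 0 = 1 := by
    simp [hadef, hxdef, he1def]
  have hb1 : b 1 = v := by
    rw [show (1:ℕ) = 0 + 1 from rfl, hb 0, ha0, hb0]
    simp
  -- decomposition of x
  have hxd : ∀ j, x j = a j • e1 + inrExt k (b j) := by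
    intro j
    funext s
    cases s with
    | inl s =>
      have hs : s = 0 := Subsingleton.elim _ _
      subst hs
      simp [hadef, he1def, inrExt]
    | inr i =>
      simp [hbdef, he1def, inrExt]
  -- submodules
  set B : Submodule ℂ (Fin k → ℂ) := Submodule.span ℂ (b '' Set.Iio (k+1)) with hBdef
  set W : Submodule ℂ (Fin k → ℂ) :=
    Submodule.span ℂ ((fun j : ℕ => A22 ^ j *ᵥ v) '' Set.Iio k) with hWdef
  -- L1 : b j lies in the span of A22^i v, i < j
  have L1 : ∀ j : ℕ, b j ∈ Submodule.span ℂ ((fun i : ℕ => A22 ^ i *ᵥ v) '' Set.Iio j) := by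
    intro j
    induction j with
    | zero => simp [hb0]
    | succ j ih =>
      rw [hb j]
      refine Submodule.add_mem _ (Submodule.smul_mem _ _ ?_) ?_
      · refine Submodule.subset_span ⟨0, by simp, ?_⟩
        simp
      · have h1 : (mulVecLin A22) (b j) ∈
            Submodule.map (mulVecLin A22)
              (Submodule.span ℂ ((fun i : ℕ => A22 ^ i *ᵥ v) '' Set.Iio j)) :=
          Submodule.mem_map_of_mem ih
        rw [Submodule.map_span] at h1
        have h2 : (mulVecLin A22) '' ((fun i : ℕ => A22 ^ i *ᵥ v) '' Set.Iio j)
            ⊆ ((fun i : ℕ => A22 ^ i *ᵥ v) '' Set.Iio (j+1)) := by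
          rintro - ⟨-, ⟨i, hi, rfl⟩, rfl⟩
          exact ⟨i+1, by simpa using Nat.succ_lt_succ hi, by
            simp [mulVecLin_apply, mulVec_mulVec, pow_succ']⟩
        have h3 := Submodule.span_mono h2 h1
        simpa [mulVecLin_apply] using h3
  -- L2 : A22^i v lies in the span of b j, j < i+2
  have L2 : ∀ i : ℕ, A22 ^ i *ᵥ v ∈ Submodule.span ℂ (b '' Set.Iio (i+2)) := by
    intro i
    induction i with
    | zero =>
      refine Submodule.subset_span ⟨1, by simp, ?_⟩
      simp [hb1]
    | succ i ih =>
      have h1 : (mulVecLin A22) (A22 ^ i *ᵥ v) ∈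
          Submodule.map (mulVecLin A22) (Submodule.span ℂ (b '' Set.Iio (i+2))) :=
        Submodule.mem_map_of_mem ih
      rw [Submodule.map_span] at h1
      have h2 : Submodule.span ℂ ((mulVecLin A22) '' (b '' Set.Iio (i+2)))
          ≤ Submodule.span ℂ (b '' Set.Iio (i+3)) := by
        rw [Submodule.span_le]
        rintro - ⟨-, ⟨j, hj, rfl⟩, rfl⟩
        have hco : (mulVecLin A22) (b j) = b (j+1) - a j • b 1 := by
          rw [hb1, hb j]; simp [mulVecLin_apply]
        rw [hco]
        refine Submodule.sub_mem _ ?_ (Submodule.smul_mem _ _ ?_)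
        · exact Submodule.subset_span ⟨j+1, by simp only [Set.mem_Iio] at hj ⊢; omega, rfl⟩
        · exact Submodule.subset_span ⟨1, Set.mem_Iio.mpr (by omega), rfl⟩
      have h3 := h2 h1
      simpa [mulVecLin_apply, mulVec_mulVec, pow_succ'] using h3
  -- B = W
  have hBW : B = W := by
    apply le_antisymm
    · rw [hBdef, Submodule.span_le]
      rintro - ⟨j, hj, rfl⟩
      have := L1 j
      have hmono : ((fun i : ℕ => A22 ^ i *ᵥ v) '' Set.Iio j)
          ⊆ ((fun i : ℕ => A22 ^ i *ᵥ v) '' Set.Iio k) := by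
        apply Set.image_mono
        intro i hi
        simp only [Set.mem_Iio] at *
        omega
      exact Submodule.span_mono hmono this
    · rw [hWdef, Submodule.span_le]
      rintro - ⟨i, hi, rfl⟩
      have := L2 i
      have hmono : (b '' Set.Iio (i+2)) ⊆ (b '' Set.Iio (k+1)) := by
        apply Set.image_mono
        intro j hj
        simp only [Set.mem_Iio] at *
        omega
      exact Submodule.span_mono hmono this
  -- columns of the big Kalman matrix
  have hcol : ∀ j : ℕ, (fun i => (A ^ j * ξ) i (0 : Fin 1)) = τ • x j := by
    intro j
    funext i
    have hξ' : ∀ s, ξ s (0 : Fin 1) = τ * e1 s := by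
      intro s; cases s <;> simp [hξ, he1def]
    simp only [Matrix.mul_apply, hξ', Pi.smul_apply, smul_eq_mul, hxdef, mulVec, dotProduct]
    rw [Finset.mul_sum]
    exact Finset.sum_congr rfl fun s _ => by ring
  -- spans
  set S : Submodule ℂ ((Fin 1 ⊕ Fin k) → ℂ) :=
    Submodule.span ℂ (Set.range (Matrix.of fun i (p : Fin m × Fin 1) =>
      (A ^ (p.1 : ℕ) * ξ) i p.2)ᵀ) with hSdef
  have he1ne : e1 ≠ 0 := by
    intro h
    have := congrFun h (Sum.inl 0)
    simp [he1def] at this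
  have he1S : e1 ∈ S := by
    have h0 : (Matrix.of fun i (p : Fin m × Fin 1) => (A ^ (p.1 : ℕ) * ξ) i p.2)ᵀ
        (⟨0, by omega⟩, 0) ∈ S :=
      Submodule.subset_span (Set.mem_range_self _)
    have hcc : (Matrix.of fun i (p : Fin m × Fin 1) => (A ^ (p.1 : ℕ) * ξ) i p.2)ᵀ
        (⟨0, by omega⟩, 0) = τ • e1 := by
      funext i
      have := congrFun (hcol 0) i
      simpa [Matrix.transpose_apply, hxdef] using this
    have : τ • e1 ∈ S := hcc ▸ h0
    have h2 : τ⁻¹ • (τ • e1) ∈ S := Submodule.smul_mem _ _ this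
    rwa [smul_smul, inv_mul_cancel₀ hτ, one_smul] at h2
  have hcolS : ∀ j : ℕ, j < m → τ • x j ∈ S := by
    intro j hj
    have h0 : (Matrix.of fun i (p : Fin m × Fin 1) => (A ^ (p.1 : ℕ) * ξ) i p.2)ᵀ
        (⟨j, hj⟩, 0) ∈ S := Submodule.subset_span (Set.mem_range_self _)
    have hcc : (Matrix.of fun i (p : Fin m × Fin 1) => (A ^ (p.1 : ℕ) * ξ) i p.2)ᵀ
        (⟨j, hj⟩, 0) = τ • x j := by
      funext i
      have := congrFun (hcol j) i
      simpa [Matrix.transpose_apply] using this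
    exact hcc ▸ h0
  have hxS : ∀ j : ℕ, j < m → x j ∈ S := by
    intro j hj
    have h2 : τ⁻¹ • (τ • x j) ∈ S := Submodule.smul_mem _ _ (hcolS j hj)
    rwa [smul_smul, inv_mul_cancel₀ hτ, one_smul] at h2
  -- S = span e1 ⊔ map inrExt B
  have hS : S = (ℂ ∙ e1) ⊔ Submodule.map (inrExt k) B := by
    apply le_antisymm
    · rw [hSdef, Submodule.span_le]
      rintro - ⟨⟨j, i0⟩, rfl⟩
      have hcc : (Matrix.of fun i (p : Fin m × Fin 1) => (A ^ (p.1 : ℕ) * ξ) i p.2)ᵀ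
          (j, i0) = τ • x (j : ℕ) := by
        funext i
        have hi0 : i0 = 0 := Subsingleton.elim _ _
        subst hi0
        have := congrFun (hcol (j : ℕ)) i
        simpa [Matrix.transpose_apply] using this
      rw [SetLike.mem_coe, hcc, hxd (j : ℕ)]
      rw [smul_add]
      refine Submodule.add_mem _ ?_ ?_
      · refine Submodule.mem_sup_left ?_
        rw [smul_smul]
        exact Submodule.smul_mem _ _ (Submodule.mem_span_singleton_self e1)
      · refine Submodule.mem_sup_right ?_
        rw [← LinearMap.map_smul]
        refine Submodule.mem_map_of_mem ?_
        refine Submodule.smul_mem _ _ ?_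
        refine Submodule.subset_span ⟨(j : ℕ), ?_, rfl⟩
        simp only [Set.mem_Iio]
        omega
    · refine sup_le ?_ ?_
      · rw [Submodule.span_singleton_le_iff_mem]
        exact he1S
      · rw [hBdef, Submodule.map_span, Submodule.span_le]
        rintro - ⟨-, ⟨j, hj, rfl⟩, rfl⟩
        have hjm : j < m := by simp only [Set.mem_Iio] at hj; omega
        have hco : inrExt k (b j) = x j - a j • e1 := by
          rw [hxd j]; abel
        rw [SetLike.mem_coe, hco]
        exact Submodule.sub_mem _ (hxS j hjm) (Submodule.smul_mem _ _ he1S)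
  -- disjointness
  have hdisj : Disjoint (ℂ ∙ e1) (Submodule.map (inrExt k) B) := by
    rw [Submodule.disjoint_def]
    intro y hy1 hy2
    obtain ⟨c, rfl⟩ := Submodule.mem_span_singleton.mp hy1
    obtain ⟨w, -, hw⟩ := hy2
    have : c = 0 := by
      have h1 := congrFun hw (Sum.inl 0)
      simpa [inrExt, he1def] using h1.symm
    simp [this]
  -- finrank computations
  have hfinS : finrank ℂ S = 1 + finrank ℂ B := by
    rw [hS]
    have := Submodule.finrank_sup_add_finrank_inf_eq (ℂ ∙ e1) (Submodule.map (inrExt k) B)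
    rw [hdisj.eq_bot, finrank_bot, add_zero] at this
    rw [this, finrank_span_singleton he1ne]
    congr 1
    exact (LinearEquiv.finrank_eq (Submodule.equivMapOfInjective _ (inrExt_inj k) B)).symm
  -- rank of small Kalman matrix = finrank W
  have hrank2 : Matrix.rank (Matrix.of fun i (p : Fin (Fintype.card (Fin k)) × Fin 1) =>
      (A22 ^ (p.1 : ℕ) * A21) i p.2) = finrank ℂ W := by
    rw [Matrix.rank_eq_finrank_span_cols]
    refine congrArg (fun p : Submodule ℂ (Fin k → ℂ) => finrank ℂ p) ?_
    apply le_antisymm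
    · rw [Submodule.span_le]
      rintro - ⟨⟨j, i0⟩, rfl⟩
      have hi0 : i0 = 0 := Subsingleton.elim _ _
      subst hi0
      have hcc : (Matrix.of fun i (p : Fin (Fintype.card (Fin k)) × Fin 1) =>
          (A22 ^ (p.1 : ℕ) * A21) i p.2)ᵀ (j, 0) = A22 ^ (j : ℕ) *ᵥ v := by
        funext i
        simp [Matrix.transpose_apply, Matrix.mul_apply, mulVec, dotProduct, hvdef]
      rw [SetLike.mem_coe, show (Matrix.of fun i (p : Fin (Fintype.card (Fin k)) × Fin 1) =>
          (A22 ^ (p.1 : ℕ) * A21) i p.2).col (j, 0) = A22 ^ (j : ℕ) *ᵥ v from hcc]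
      refine Submodule.subset_span ⟨(j : ℕ), ?_, rfl⟩
      simp only [Set.mem_Iio]
      have := j.isLt
      simpa using this
    · rw [hWdef, Submodule.span_le]
      rintro - ⟨i, hi, rfl⟩
      simp only [Set.mem_Iio] at hi
      have hcc : (Matrix.of fun i' (p : Fin (Fintype.card (Fin k)) × Fin 1) =>
          (A22 ^ (p.1 : ℕ) * A21) i' p.2)ᵀ (⟨i, by simpa using hi⟩, 0) = A22 ^ i *ᵥ v := by
        funext i'
        simp [Matrix.transpose_apply, Matrix.mul_apply, mulVec, dotProduct, hvdef]
      show A22 ^ i *ᵥ v ∈ _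
      rw [← hcc]
      exact Submodule.subset_span (Set.mem_range_self _)
  -- rank of big Kalman matrix
  have hrank1 : Matrix.rank (Matrix.of fun i (p : Fin m × Fin 1) =>
      (A ^ (p.1 : ℕ) * ξ) i p.2) = finrank ℂ S := by
    rw [Matrix.rank_eq_finrank_span_cols]
    rfl
  -- conclude
  unfold Controllable
  rw [hrank1, hrank2, hfinS, hBW]
  constructor
  · intro h
    have hk : finrank ℂ W = k := by omega
    simp only [Fintype.card_fin]
    exact hk
  · intro h
    simp only [Fintype.card_fin] at h
    omega
end

section
/- Fix z̄ ∈ ℂ with Im(z̄) > 0. Define Δ as the set of 2×2 complex symmetric matrices Z with Im(Z) positive definite, (diag[1,-1]·Z)^2 = -I2, and det(Z + (1/z̄)I2) = 0. Then Δ contains exactly two matrices: Z = [[(z̄²-1)/(2z̄), (z̄²+1)/(2z̄)],[(z̄²+1)/(2z̄), (z̄²-1)/(2z̄)]] and Z = [[(z̄²-1)/(2z̄), -(z̄²+1)/(2z̄)],[-(z̄²+1)/(2z̄), (z̄²-1)/(2z̄)]]. -/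
open Matrix

lemma posdef_two (p q : ℝ) (h1 : 0 < p + q) (h2 : 0 < p - q) :
    (!![p, q; q, p] : Matrix (Fin 2) (Fin 2) ℝ).PosDef := by
  refine Matrix.PosDef.of_dotProduct_mulVec_pos ?_ ?_
  · ext i j
    fin_cases i <;> fin_cases j <;> simp [Matrix.conjTranspose_apply]
  · intro x hx
    have hpos : 0 < (x 0) ^ 2 + (x 1) ^ 2 := by
      rcases (by
        by_contra h
        push_neg at h
        exact hx (by ext i; fin_cases i <;> simp [h.1, h.2]) : x 0 ≠ 0 ∨ x 1 ≠ 0) with h | h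
      · positivity
      · positivity
    have hq : star x ⬝ᵥ ((!![p, q; q, p] : Matrix (Fin 2) (Fin 2) ℝ) *ᵥ x)
        = p * (x 0) ^ 2 + 2 * q * (x 0) * (x 1) + p * (x 1) ^ 2 := by
      simp [dotProduct, Matrix.mulVec, Fin.sum_univ_two]
      ring
    rw [hq]
    rcases le_or_gt 0 q with hg | hg
    · nlinarith [mul_nonneg hg (sq_nonneg (x 0 + x 1)), sq_nonneg (x 0 - x 1), mul_pos h2 hpos]
    · nlinarith [mul_nonneg (neg_nonneg.mpr hg.le) (sq_nonneg (x 0 - x 1)),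
        sq_nonneg (x 0 + x 1), mul_pos h1 hpos]

set_option maxHeartbeats 1000000 in
theorem Delta_eq_pair (z : ℂ) (hz : 0 < z.im) :
    {Z : Matrix (Fin 2) (Fin 2) ℂ |
        Z.IsSymm ∧
        (Matrix.of fun i j => (Z i j).im).PosDef ∧
        (Matrix.diagonal ![(1 : ℂ), -1] * Z) ^ 2 = -1 ∧
        Matrix.det (Z + (1 / z) • (1 : Matrix (Fin 2) (Fin 2) ℂ)) = 0} =
      {!![(z ^ 2 - 1) / (2 * z), (z ^ 2 + 1) / (2 * z);
          (z ^ 2 + 1) / (2 * z), (z ^ 2 - 1) / (2 * z)],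
       !![(z ^ 2 - 1) / (2 * z), -((z ^ 2 + 1) / (2 * z));
          -((z ^ 2 + 1) / (2 * z)), (z ^ 2 - 1) / (2 * z)]} := by
  have hz0 : z ≠ 0 := fun h => by simp [h] at hz
  have hdiag : (Matrix.diagonal ![(1 : ℂ), -1]) = !![1, 0; 0, -1] := by
    ext i j
    fin_cases i <;> fin_cases j <;> simp [Matrix.diagonal]
  ext Z
  simp only [Set.mem_setOf_eq, Set.mem_insert_iff, Set.mem_singleton_iff]
  constructor
  · rintro ⟨hsym, hpd, hsq, hdet⟩
    obtain ⟨a, b, d, hZ⟩ : ∃ a b d, Z = !![a, b; b, d] := by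
      refine ⟨Z 0 0, Z 0 1, Z 1 1, ?_⟩
      have h10 : Z 1 0 = Z 0 1 := by
        rw [Matrix.IsSymm] at hsym
        simpa using (congrFun (congrFun hsym 1) 0).symm
      ext i j
      fin_cases i <;> fin_cases j <;> simp [h10]
    subst hZ
    rw [hdiag, pow_two, Matrix.mul_fin_two, Matrix.mul_fin_two] at hsq
    have e00 := congrFun (congrFun hsq 0) 0
    have e01 := congrFun (congrFun hsq 0) 1
    simp [Matrix.one_fin_two] at e00 e01
    have hdet' : (a + 1 / z) * (d + 1 / z) - b * b = 0 := by
      have hrw : (!![a, b; b, d] : Matrix (Fin 2) (Fin 2) ℂ) + (1 / z) • 1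
          = !![a + 1 / z, b; b, d + 1 / z] := by
        ext i j
        fin_cases i <;> fin_cases j <;> simp [Matrix.one_apply]
      rw [hrw, Matrix.det_fin_two_of] at hdet
      linear_combination hdet
    have him : ∀ i : Fin 2, 0 < ((!![a, b; b, d] : Matrix (Fin 2) (Fin 2) ℂ) i i).im := by
      intro i
      have := hpd.dotProduct_mulVec_pos (x := Pi.single i 1) (by
        intro h
        have := congrFun h i
        simp at this)
      simpa [dotProduct, Matrix.mulVec, Fin.sum_univ_two, Pi.single_apply,
        Finset.sum_ite_eq] using this
    have hima : 0 < a.im := by simpa using him 0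
    have himd : 0 < d.im := by simpa using him 1
    by_cases hbz : b = 0
    · subst hbz
      have haI : a = Complex.I := by
        have h2 : (a - Complex.I) * (a + Complex.I) = 0 := by
          linear_combination e00 - Complex.I_sq
        rcases mul_eq_zero.mp h2 with h | h
        · linear_combination h
        · exfalso
          have hai : a = -Complex.I := by linear_combination h
          rw [hai] at hima
          simp at hima
          linarith
      have hdI : d = Complex.I := by
        have e11 := congrFun (congrFun hsq 1) 1
        simp [Matrix.one_fin_two] at e11
        have h2 : (d - Complex.I) * (d + Complex.I) = 0 := by
          linear_combination e11 - Complex.I_sq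
        rcases mul_eq_zero.mp h2 with h | h
        · linear_combination h
        · exfalso
          have hdi : d = -Complex.I := by linear_combination h
          rw [hdi] at himd
          simp at himd
          linarith
      have hzI : z = Complex.I := by
        rw [haI, hdI] at hdet'
        have h4 : (Complex.I + 1 / z) * (Complex.I + 1 / z) = 0 := by
          linear_combination hdet'
        have h3 := mul_self_eq_zero.mp h4
        field_simp at h3
        linear_combination (-Complex.I) * h3 + z * Complex.I_sq
      left
      have hc1 : (z ^ 2 - 1) / (2 * z) = Complex.I := by
        rw [hzI, Complex.I_sq]
        rw [div_eq_iff (by simp [Complex.I_ne_zero] : (2:ℂ) * Complex.I ≠ 0)]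
        linear_combination (-2) * Complex.I_sq
      have hc2 : (z ^ 2 + 1) / (2 * z) = 0 := by
        rw [hzI, Complex.I_sq]
        norm_num
      rw [hc1, hc2, haI, hdI]
    · have had : a = d := by
        have h : b * (a - d) = 0 := by linear_combination e01
        rcases mul_eq_zero.mp h with h | h
        · exact absurd h hbz
        · linear_combination h
      have h1 : a ^ 2 - b ^ 2 = -1 := by linear_combination e00
      have h2 : (a + 1 / z) ^ 2 = b ^ 2 := by
        rw [← had] at hdet'
        linear_combination hdet'
      have h2' : (a * z + 1) ^ 2 = b ^ 2 * z ^ 2 := by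
        field_simp at h2
        linear_combination h2
      have haA : a = (z ^ 2 - 1) / (2 * z) := by
        field_simp
        linear_combination (-z ^ 2) * h1 + h2'
      have hb2 : (b - (z ^ 2 + 1) / (2 * z)) * (b + (z ^ 2 + 1) / (2 * z)) = 0 := by
        have : b ^ 2 = ((z ^ 2 + 1) / (2 * z)) ^ 2 := by
          rw [← h2, haA]
          field_simp
          ring
        linear_combination this
      have hdA : d = (z ^ 2 - 1) / (2 * z) := by rw [← had]; exact haA
      rcases mul_eq_zero.mp hb2 with h | h
      · left
        rw [(by linear_combination h : b = (z ^ 2 + 1) / (2 * z)), haA, hdA]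
      · right
        rw [(by linear_combination h : b = -((z ^ 2 + 1) / (2 * z))), haA, hdA]
  · intro hZ
    have hABz : (z ^ 2 - 1) / (2 * z) + (z ^ 2 + 1) / (2 * z) = z := by
      field_simp
      ring
    have h1 : ((z ^ 2 - 1) / (2 * z)).im + ((z ^ 2 + 1) / (2 * z)).im = z.im := by
      rw [← Complex.add_im, hABz]
    have hABm : (z ^ 2 - 1) / (2 * z) - (z ^ 2 + 1) / (2 * z) = -(1 / z) := by
      field_simp
      ring
    have h2 : ((z ^ 2 - 1) / (2 * z)).im - ((z ^ 2 + 1) / (2 * z)).im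
        = z.im / Complex.normSq z := by
      rw [← Complex.sub_im, hABm]
      simp [one_div, Complex.inv_im, neg_div]
    have hqpos : 0 < z.im / Complex.normSq z := div_pos hz (Complex.normSq_pos.mpr hz0)
    have hp1 : 0 < ((z ^ 2 - 1) / (2 * z)).im + ((z ^ 2 + 1) / (2 * z)).im := by
      rw [h1]; exact hz
    have hp2 : 0 < ((z ^ 2 - 1) / (2 * z)).im - ((z ^ 2 + 1) / (2 * z)).im := by
      rw [h2]; exact hqpos
    rcases hZ with rfl | rfl
    · refine ⟨?_, ?_, ?_, ?_⟩
      · ext i j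
        fin_cases i <;> fin_cases j <;> simp [Matrix.transpose_apply]
      · have hof : (Matrix.of fun i j =>
            ((!![(z ^ 2 - 1) / (2 * z), (z ^ 2 + 1) / (2 * z);
                (z ^ 2 + 1) / (2 * z), (z ^ 2 - 1) / (2 * z)] : Matrix (Fin 2) (Fin 2) ℂ) i j).im)
            = !![((z ^ 2 - 1) / (2 * z)).im, ((z ^ 2 + 1) / (2 * z)).im;
                ((z ^ 2 + 1) / (2 * z)).im, ((z ^ 2 - 1) / (2 * z)).im] := by
          ext i j
          fin_cases i <;> fin_cases j <;> simp
        rw [hof]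
        exact posdef_two _ _ hp1 hp2
      · rw [hdiag, pow_two, Matrix.mul_fin_two]
        ext i j
        fin_cases i <;> fin_cases j <;>
          simp [Matrix.one_apply] <;> field_simp <;> ring
      · have hrw : (!![(z ^ 2 - 1) / (2 * z), (z ^ 2 + 1) / (2 * z);
              (z ^ 2 + 1) / (2 * z), (z ^ 2 - 1) / (2 * z)] : Matrix (Fin 2) (Fin 2) ℂ)
              + (1 / z) • 1
            = !![(z ^ 2 - 1) / (2 * z) + 1 / z, (z ^ 2 + 1) / (2 * z);
                (z ^ 2 + 1) / (2 * z), (z ^ 2 - 1) / (2 * z) + 1 / z] := by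
          ext i j
          fin_cases i <;> fin_cases j <;> simp [Matrix.one_apply]
        rw [hrw, Matrix.det_fin_two_of]
        field_simp
        ring
    · refine ⟨?_, ?_, ?_, ?_⟩
      · ext i j
        fin_cases i <;> fin_cases j <;> simp [Matrix.transpose_apply]
      · have hof : (Matrix.of fun i j =>
            ((!![(z ^ 2 - 1) / (2 * z), -((z ^ 2 + 1) / (2 * z));
                -((z ^ 2 + 1) / (2 * z)), (z ^ 2 - 1) / (2 * z)] : Matrix (Fin 2) (Fin 2) ℂ) i j).im)
            = !![((z ^ 2 - 1) / (2 * z)).im, -((z ^ 2 + 1) / (2 * z)).im;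
                -((z ^ 2 + 1) / (2 * z)).im, ((z ^ 2 - 1) / (2 * z)).im] := by
          ext i j
          fin_cases i <;> fin_cases j <;> simp
        rw [hof]
        exact posdef_two _ _ (by linarith) (by linarith)
      · rw [hdiag, pow_two, Matrix.mul_fin_two]
        ext i j
        fin_cases i <;> fin_cases j <;>
          simp [Matrix.one_apply] <;> field_simp <;> ring
      · have hrw : (!![(z ^ 2 - 1) / (2 * z), -((z ^ 2 + 1) / (2 * z));
              -((z ^ 2 + 1) / (2 * z)), (z ^ 2 - 1) / (2 * z)] : Matrix (Fin 2) (Fin 2) ℂ)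
              + (1 / z) • 1
            = !![(z ^ 2 - 1) / (2 * z) + 1 / z, -((z ^ 2 + 1) / (2 * z));
                -((z ^ 2 + 1) / (2 * z)), (z ^ 2 - 1) / (2 * z) + 1 / z] := by
          ext i j
          fin_cases i <;> fin_cases j <;> simp [Matrix.one_apply]
        rw [hrw, Matrix.det_fin_two_of]
        field_simp
        ring
end

section
/- Let z̄ = x + iy with x, y ∈ ℝ, y > 0, and let Z = [[z11, z12],[z12, z11]] where z11 = (z̄²-1)/(2z̄) and z12 = ±(z̄²+1)/(2z̄). Then the imaginary part of Z is a positive definite 2×2 real symmetric matrix. -/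
open Matrix

theorem im_posDef (x y : ℝ) (hy : 0 < y) (z : ℂ)
    (hz : z = (x : ℂ) + (y : ℂ) * Complex.I)
    (z11 z12 : ℂ) (h11 : z11 = (z ^ 2 - 1) / (2 * z))
    (h12 : z12 = (z ^ 2 + 1) / (2 * z) ∨ z12 = -((z ^ 2 + 1) / (2 * z)))
    (Z : Matrix (Fin 2) (Fin 2) ℂ) (hZ : Z = !![z11, z12; z12, z11]) :
    (Matrix.of fun i j => (Z i j).im).PosDef := by
  have hr : (0:ℝ) < x^2 + y^2 := by positivity
  have h4 : x^2*4 + y^2*4 ≠ 0 := by positivity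
  have h2 : x^2*2 + y^2*2 ≠ 0 := by positivity
  set a : ℝ := z11.im with ha0
  set b : ℝ := z12.im with hb0
  have ha : a = y/2 + y/(2*(x^2+y^2)) := by
    rw [ha0, h11, hz, Complex.div_im]
    simp only [Complex.normSq_apply, pow_two, Complex.add_im, Complex.add_re, Complex.mul_im,
      Complex.mul_re, Complex.sub_im, Complex.sub_re, Complex.one_im, Complex.one_re,
      Complex.ofReal_im, Complex.ofReal_re, Complex.I_re, Complex.I_im, Complex.re_ofNat,
      Complex.im_ofNat]
    ring_nf
    field_simp
    ring
  have hb : b = y/2 - y/(2*(x^2+y^2)) ∨ b = -(y/2 - y/(2*(x^2+y^2))) := by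
    rcases h12 with h | h <;> [left; right] <;>
      rw [hb0, h, hz] <;>
      simp only [Complex.neg_im, Complex.div_im, Complex.normSq_apply, pow_two, Complex.add_im,
        Complex.add_re, Complex.mul_im, Complex.mul_re, Complex.one_im, Complex.one_re,
        Complex.ofReal_im, Complex.ofReal_re, Complex.I_re, Complex.I_im, Complex.re_ofNat,
        Complex.im_ofNat] <;>
      ring_nf <;> field_simp <;> ring
  -- key inequalities
  have hab1 : 0 < a + b := by
    rcases hb with h | h <;> rw [ha, h]
    · have : y/2 + y/(2*(x^2+y^2)) + (y/2 - y/(2*(x^2+y^2))) = y := by ring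
      rw [this]; exact hy
    · have : y/2 + y/(2*(x^2+y^2)) + -(y/2 - y/(2*(x^2+y^2))) = y/(x^2+y^2) := by
        field_simp; ring
      rw [this]; positivity
  have hab2 : 0 < a - b := by
    rcases hb with h | h <;> rw [ha, h]
    · have : y/2 + y/(2*(x^2+y^2)) - (y/2 - y/(2*(x^2+y^2))) = y/(x^2+y^2) := by
        field_simp; ring
      rw [this]; positivity
    · have : y/2 + y/(2*(x^2+y^2)) - -(y/2 - y/(2*(x^2+y^2))) = y := by ring
      rw [this]; exact hy
  have hM : (Matrix.of fun i j => (Z i j).im) = !![a, b; b, a] := by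
    subst hZ
    ext i j
    fin_cases i <;> fin_cases j <;> simp [ha0, hb0]
  rw [hM]
  rw [Matrix.posDef_iff_dotProduct_mulVec]
  constructor
  · rw [Matrix.IsHermitian]
    ext i j
    fin_cases i <;> fin_cases j <;> simp [Matrix.conjTranspose_apply]
  · intro v hv
    have hv' : v 0 ≠ 0 ∨ v 1 ≠ 0 := by
      by_contra h
      push_neg at h
      apply hv
      ext i; fin_cases i <;> simp [h.1, h.2]
    have expand : dotProduct (star v) ((!![a, b; b, a] : Matrix (Fin 2) (Fin 2) ℝ) *ᵥ v)
        = v 0 * (a * v 0 + b * v 1) + v 1 * (b * v 0 + a * v 1) := by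
      simp [dotProduct, Matrix.mulVec, Fin.sum_univ_two]
    rw [expand]
    have key : v 0 * (a * v 0 + b * v 1) + v 1 * (b * v 0 + a * v 1)
        = ((a+b) * (v 0 + v 1)^2 + (a-b) * (v 0 - v 1)^2) / 2 := by ring
    rw [key]
    rcases eq_or_ne (v 0 + v 1) 0 with hs | hs
    · have hd : v 0 - v 1 ≠ 0 := by
        intro hd
        rcases hv' with h | h <;> apply h <;> linarith [hs, hd]
      have h1 := mul_pos hab2 (pow_pos (abs_pos.mpr hd) 2)
      nlinarith [mul_nonneg hab1.le (sq_nonneg (v 0 + v 1)), sq_abs (v 0 - v 1),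
        mul_pos hab2 (pow_pos (abs_pos.mpr hd) 2)]
    · nlinarith [mul_nonneg hab2.le (sq_nonneg (v 0 - v 1)),
        mul_pos hab1 (pow_pos (abs_pos.mpr hs) 2), sq_abs (v 0 + v 1)]
end
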